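/- Let G be a group, k a positive natural number, s : Fin k → G, and let π : G →* H be a surjective group homomorphism. Then ρ(G, s) ≤ ρ(H, π ∘ s): the spectral radius does not decrease when passing to a quotient (property (∗) of Proposition 1.4 for the spectral radius). -/

import Mathlib

open Filter

/-- The cogrowth count of a marked group `(G, s)`: the number of words of length `n`
in the generators whose product equals the identity. -/
noncomputable def cogrowthCount {G : Type*} [Group G] {k : ℕ} (s : Fin k → G) (n : ℕ) : ℕ :=
  Nat.card {w : Fin n → Fin k | (List.ofFn (fun i => s (w i))).prod = 1}

/-- The spectral radius of a marked group `(G, s)`: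
`ρ(G, s) = limsup_{n → ∞} c(n)^(1/n) / k`. -/
noncomputable def markedSpectralRadius {G : Type*} [Group G] {k : ℕ} (s : Fin k → G) : ℝ :=
  Filter.atTop.limsup fun n : ℕ =>
    (cogrowthCount s n : ℝ) ^ ((1 : ℝ) / n) / k

lemma cogrowthCount_le_quotient {G H : Type*} [Group G] [Group H] {k : ℕ}
    (s : Fin k → G) (π : G →* H) (n : ℕ) :
    cogrowthCount s n ≤ cogrowthCount (⇑π ∘ s) n := by
  apply Nat.card_mono (Set.toFinite _)
  intro w hw
  simp only [Set.mem_setOf_eq] at hw ⊢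
  have : π (List.ofFn (fun i => s (w i))).prod = π 1 := by rw [hw]
  rw [map_list_prod] at this
  simpa [List.map_ofFn, Function.comp_def] using this

lemma cogrowthCount_le_pow {G : Type*} [Group G] {k : ℕ} (s : Fin k → G) (n : ℕ) :
    cogrowthCount s n ≤ k ^ n := by
  have h := Nat.card_le_card_of_injective
    (Subtype.val : {w : Fin n → Fin k | (List.ofFn (fun i => s (w i))).prod = 1} → (Fin n → Fin k))
    Subtype.val_injective
  exact h.trans_eq (by simp [Nat.card_eq_fintype_card])

theorem markedSpectralRadius_le_quotient {G H : Type*} [Group G] [Group H] (k : ℕ) (hk : 0 < k)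
    (s : Fin k → G) (π : G →* H) (hπ : Function.Surjective π) :
    markedSpectralRadius s ≤ markedSpectralRadius (⇑π ∘ s) := by
  have hk' : (0 : ℝ) < k := by exact_mod_cast hk
  apply Filter.limsup_le_limsup
  · filter_upwards with n
    gcongr ?_ / (k:ℝ)
    exact Real.rpow_le_rpow (by positivity) (by exact_mod_cast cogrowthCount_le_quotient s π n)
      (by positivity)
  · apply isCoboundedUnder_le_of_le atTop (x := 0)
    intro n
    positivity
  · apply isBoundedUnder_of
    refine ⟨1, fun n => ?_⟩
    rw [div_le_one hk']
    rcases Nat.eq_zero_or_pos n with rfl | hn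
    · simp [Real.rpow_natCast]
      exact_mod_cast hk
    · have h1 : (cogrowthCount (⇑π ∘ s) n : ℝ) ≤ (k : ℝ) ^ n := by
        exact_mod_cast cogrowthCount_le_pow _ n
      calc (cogrowthCount (⇑π ∘ s) n : ℝ) ^ ((1:ℝ)/n)
          ≤ ((k : ℝ) ^ n) ^ ((1:ℝ)/n) := Real.rpow_le_rpow (by positivity) h1 (by positivity)
        _ = k := by
            rw [← Real.rpow_natCast (k:ℝ) n, ← Real.rpow_mul hk'.le]
            rw [mul_one_div, div_self (by exact_mod_cast hn.ne')]
            exact Real.rpow_one _
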